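/- arXiv:0809.0603 — 2 statements merged into one kernel-verified Lean document; each statement's English description precedes it below -/
import Mathlib

section
/- Let u be an aperiodic uniformly recurrent infinite word over a finite alphabet. Then every factor w of u has finite index, i.e., sup{r ∈ ℚ : w^r is a factor of u} < ∞. -/
open Filter Topology

namespace SturmianPaper

variable {A : Type*} [DecidableEq A]

/-- The factor `w` occurs in the infinite word `u` at position `i`. -/
def FactorAt (u : ℕ → A) (w : List A) (i : ℕ) : Prop :=
  w = (List.range w.length).map fun j => u (i + j)

/-- `w` is a factor of the infinite word `u`. -/
def IsFactor (u : ℕ → A) (w : List A) : Prop := ∃ i, FactorAt u w i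

/-- The factor complexity of `u`: the number of factors of length `n`. -/
noncomputable def complexity (u : ℕ → A) (n : ℕ) : ℕ :=
  Set.ncard {w : List A | IsFactor u w ∧ w.length = n}

/-- A Sturmian word: complexity `n + 1` for every `n` (this forces aperiodicity). -/
def IsSturmian (u : ℕ → A) : Prop := ∀ n, complexity u n = n + 1

/-- `u` is eventually periodic. -/
def EventuallyPeriodic (u : ℕ → A) : Prop :=
  ∃ p > 0, ∃ N, ∀ n ≥ N, u (n + p) = u n

/-- `u` is uniformly recurrent: every factor occurs with bounded gaps. -/
def UniformlyRecurrent (u : ℕ → A) : Prop :=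
  ∀ w, IsFactor u w → ∃ B, ∀ k, ∃ i, k ≤ i ∧ i < k + B ∧ FactorAt u w i

/-- The number of occurrences of `w` in the finite word `x`. -/
def occCount (x w : List A) : ℕ :=
  ((List.range (x.length + 1)).filter fun i => decide (w <+: x.drop i)).length

/-- `v` is a return word of the factor `w` of `u`. -/
def IsReturnWord (u : ℕ → A) (w v : List A) : Prop :=
  v ≠ [] ∧ IsFactor u (v ++ w) ∧ w <+: v ++ w ∧ occCount (v ++ w) w = 2

/-- Recurrence function: `R n + 1` is the maximal length of a complete return word
`v ++ w` over factors `w` of length `n` and return words `v` of `w`. -/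
noncomputable def recFun (u : ℕ → A) (n : ℕ) : ℕ :=
  sSup {m | ∃ w v, IsFactor u w ∧ w.length = n ∧ IsReturnWord u w v ∧
    m + 1 = v.length + w.length}

/-- `v = w ^ (|v| / |w|)`: `v` is a fractional power of `w`,
i.e. a prefix of `w w w ⋯` of length at least `|w|`. -/
def FracPow (w v : List A) : Prop :=
  w ≠ [] ∧ w.length ≤ v.length ∧ ∀ i < v.length, v[i]? = w[i % w.length]?

/-- The set of rational exponents `r` (viewed inside `ℝ`) such that `w ^ r ∈ L(u)`. -/
def expSet (u : ℕ → A) (w : List A) : Set ℝ :=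
  {r | ∃ v, IsFactor u v ∧ FracPow w v ∧ r = (v.length : ℝ) / (w.length : ℝ)}

/-- The index of the factor `w` in `u`: `sup {r ∈ ℚ | w ^ r ∈ L(u)}`. -/
noncomputable def index (u : ℕ → A) (w : List A) : ℝ := sSup (expSet u w)

/-- A finite word is primitive if it is not a proper integer power. -/
def Primitive (w : List A) : Prop :=
  w ≠ [] ∧ ∀ (z : List A) (k : ℕ), 2 ≤ k → w ≠ (List.replicate k z).flatten

/-- `w` is left special in `u` (alphabet `Bool`, `true = A`, `false = B`). -/
def LeftSpecial (u : ℕ → Bool) (w : List Bool) : Prop :=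
  IsFactor u (true :: w) ∧ IsFactor u (false :: w)

/-- `w` is right special in `u`. -/
def RightSpecial (u : ℕ → Bool) (w : List Bool) : Prop :=
  IsFactor u (w ++ [true]) ∧ IsFactor u (w ++ [false])

/-- The Sturmian word of slope `α` and intercept `x₀`, coding the orbit of `x₀`
under the exchange of the two intervals `I_A = [0, α)` (coded `true`) and
`I_B = [α, 1)` (coded `false`); the exchange is the rotation `x ↦ x + (1 - α) mod 1`. -/
noncomputable def sturmianWord (α x₀ : ℝ) : ℕ → Bool :=
  fun n => decide (Int.fract (x₀ + n * (1 - α)) < α)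

/-- The Sturmian morphism `A ↦ AᶜB`, `B ↦ A` applied to a finite word. -/
def phiW (c : ℕ) (w : List Bool) : List Bool :=
  (w.map fun b => if b then List.replicate c true ++ [false] else [true]).flatten

/-- The Sturmian morphism `A ↦ AᶜB`, `B ↦ A` applied to an infinite word. -/
noncomputable def phiInf (c : ℕ) (u : ℕ → Bool) : ℕ → Bool :=
  fun n => (phiW c ((List.range (n + 1)).map u)).getD n false


lemma factorAt_getElem? {u : ℕ → A} {v : List A} {i : ℕ} (h : FactorAt u v i)
    {t : ℕ} (ht : t < v.length) : v[t]? = some (u (i + t)) := by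
  conv_lhs => rw [h]
  rw [List.getElem?_map, List.getElem?_range ht]
  rfl

/-- every factor of an aperiodic uniformly recurrent word over a
finite alphabet has finite index, i.e. the set of exponents is bounded above. -/
theorem factor_index_finite {A : Type*} [DecidableEq A] [Fintype A]
    (u : ℕ → A) (hap : ¬ EventuallyPeriodic u) (hur : UniformlyRecurrent u)
    (w : List A) (hw : IsFactor u w) :
    BddAbove (expSet u w) := by
  by_contra hB
  -- arbitrarily long fractional powers of `w` are factors of `u`
  have hlong : ∀ L : ℕ, ∃ v, IsFactor u v ∧ FracPow w v ∧ L ≤ v.length := by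
    intro L
    rcases not_bddAbove_iff.mp hB (L : ℝ) with ⟨r, ⟨v, hv, hfp, hr⟩, hrL⟩
    refine ⟨v, hv, hfp, ?_⟩
    by_contra hlen
    push_neg at hlen
    have hw1 : (1 : ℝ) ≤ (w.length : ℝ) := by
      have : 0 < w.length := List.length_pos_iff.mpr hfp.1
      exact_mod_cast this
    have : r ≤ (v.length : ℝ) := by
      rw [hr]
      exact div_le_self (by positivity) hw1
    have : r < (L : ℝ) := lt_of_le_of_lt this (by exact_mod_cast hlen)
    linarith
  obtain ⟨v0, _, hfp0, _⟩ := hlong 0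
  have hw0 : w ≠ [] := hfp0.1
  have hwpos : 0 < w.length := List.length_pos_iff.mpr hw0
  -- key: every prefix of `u` matches `w` cyclically at some offset
  have key : ∀ n : ℕ, ∃ j < w.length, ∀ t < n,
      w[(j + t) % w.length]? = some (u t) := by
    intro n
    set p : List A := (List.range n).map u with hp
    have hplen : p.length = n := by simp [hp]
    have hpfac : FactorAt u p 0 := by
      unfold FactorAt
      simp [hp]
    obtain ⟨B, hB'⟩ := hur p ⟨0, hpfac⟩
    obtain ⟨v, ⟨i, hvi⟩, hfp, hvlen⟩ := hlong (B + n)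
    obtain ⟨i', hii', hi'B, hpi'⟩ := hB' i
    refine ⟨(i' - i) % w.length, Nat.mod_lt _ hwpos, ?_⟩
    intro t ht
    have h1 : i' - i + t < v.length := by omega
    have h2 : v[i' - i + t]? = some (u (i + (i' - i + t))) := factorAt_getElem? hvi h1
    have h3 : i + (i' - i + t) = i' + t := by omega
    have h4 : w[(i' - i + t) % w.length]? = some (u (i' + t)) := by
      rw [← hfp.2.2 _ h1, h2, h3]
    have h5 : p[t]? = some (u (i' + t)) := factorAt_getElem? hpi' (by omega)
    have h6 : p[t]? = some (u (0 + t)) := factorAt_getElem? hpfac (by omega)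
    rw [Nat.mod_add_mod, h4, ← h5, h6, Nat.zero_add]
  -- pigeonhole: a single offset works for all prefixes
  have hP : ∃ j, ∀ t, w[(j + t) % w.length]? = some (u t) := by
    by_contra h
    push_neg at h
    choose f hf using h
    set N := (Finset.range w.length).sup f + 1 with hN
    obtain ⟨j, hj, hall⟩ := key N
    exact hf j (hall (f j)
      (Nat.lt_succ_of_le (Finset.le_sup (Finset.mem_range.mpr hj))))
  obtain ⟨j, hj⟩ := hP
  refine hap ⟨w.length, hwpos, 0, fun n _ => ?_⟩
  have h1 := hj (n + w.length)
  have h2 := hj n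
  have h3 : (j + (n + w.length)) % w.length = (j + n) % w.length := by
    rw [← Nat.add_assoc, Nat.add_mod_right]
  rw [h3, h2] at h1
  exact (Option.some.inj h1).symm

end SturmianPaper
end

section
/- Let u be an aperiodic uniformly recurrent infinite word with complexity function C and recurrence function R. Then for every factor w of u, R(|w|) ≥ |w|·ind(w) + C(|w|) − |w|. -/
open Filter Topology

namespace SturmianPaper

variable {A : Type*} [DecidableEq A]

set_option linter.unusedSectionVars false
set_option maxHeartbeats 1000000
def win (u : ℕ → A) (i k : ℕ) : List A := (List.range k).map fun j => u (i + j)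

@[simp] lemma win_length (u : ℕ → A) (i k : ℕ) : (win u i k).length = k := by
  simp [win]

lemma factorAt_iff_win {u : ℕ → A} {w : List A} {i : ℕ} :
    FactorAt u w i ↔ w = win u i w.length := Iff.rfl

lemma factorAt_win (u : ℕ → A) (i k : ℕ) : FactorAt u (win u i k) i := by
  rw [factorAt_iff_win, win_length]

lemma win_add (u : ℕ → A) (i a b : ℕ) :
    win u i (a + b) = win u i a ++ win u (i + a) b := by
  simp only [win, List.range_add, List.map_append, List.map_map]
  congr 1
  apply List.map_congr_left
  intro j _
  simp [Function.comp, add_assoc]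

lemma win_take (u : ℕ → A) (i k t : ℕ) : (win u i k).take t = win u i (min t k) := by
  simp [win, ← List.map_take, List.take_range]

lemma win_drop (u : ℕ → A) {k t : ℕ} (i : ℕ) (h : t ≤ k) :
    (win u i k).drop t = win u (i + t) (k - t) := by
  have hk : k = t + (k - t) := by omega
  conv_lhs => rw [hk, win_add]
  rw [List.drop_left' (by simp)]

lemma win_getElem? {u : ℕ → A} {j k : ℕ} (i : ℕ) (h : j < k) :
    (win u i k)[j]? = some (u (i + j)) := by
  simp [win, List.getElem?_map, List.getElem?_range, h]

lemma prefix_win_iff {u : ℕ → A} {w : List A} {i k : ℕ} :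
    w <+: win u i k ↔ (w.length ≤ k ∧ FactorAt u w i) := by
  constructor
  · intro h
    have hl : w.length ≤ k := by simpa using h.length_le
    refine ⟨hl, ?_⟩
    rw [factorAt_iff_win]
    have := List.prefix_iff_eq_take.mp h
    rwa [win_take, min_eq_left hl] at this
  · rintro ⟨hl, hf⟩
    rw [List.prefix_iff_eq_take, win_take, min_eq_left hl]
    exact hf

lemma mem_occ_filter_iff {u : ℕ → A} {w : List A} {i L t : ℕ} (hw : 0 < w.length) :
    (t ∈ (List.range ((win u i L).length + 1)).filter
      fun s => decide (w <+: (win u i L).drop s)) ↔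
      (w.length + t ≤ L ∧ FactorAt u w (i + t)) := by
  rw [List.mem_filter, List.mem_range, win_length, decide_eq_true_eq]
  constructor
  · rintro ⟨ht, hp⟩
    have ht' : t ≤ L := by omega
    rw [win_drop u i ht', prefix_win_iff] at hp
    exact ⟨by omega, hp.2⟩
  · rintro ⟨hl, hf⟩
    have ht' : t ≤ L := by omega
    rw [win_drop u i ht', prefix_win_iff]
    exact ⟨by omega, ⟨by omega, hf⟩⟩

lemma occCount_eq_two {u : ℕ → A} {w : List A} {i L c : ℕ} (hw : 0 < w.length)
    (hc : c ≠ 0)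
    (h : ∀ t, (w.length + t ≤ L ∧ FactorAt u w (i + t)) ↔ (t = 0 ∨ t = c)) :
    occCount (win u i L) w = 2 := by
  unfold occCount
  rw [win_length]
  set l := (List.range (L + 1)).filter fun s => decide (w <+: (win u i L).drop s) with hl
  have hnd : l.Nodup := List.nodup_range.filter _
  have hmem : ∀ t, t ∈ l ↔ (t = 0 ∨ t = c) := by
    intro t
    rw [hl, ← h t]
    have := mem_occ_filter_iff (u := u) (i := i) (L := L) (t := t) hw
    rwa [win_length] at this
  have htf : l.toFinset = {0, c} := by
    ext t
    simp [List.mem_toFinset, hmem t]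
  have := List.toFinset_card_of_nodup hnd
  rw [htf] at this
  rw [← this, Finset.card_pair (Ne.symm hc)]

lemma occCount_two_mem {u : ℕ → A} {w : List A} {i L c t : ℕ} (hw : 0 < w.length)
    (hocc : occCount (win u i L) w = 2)
    (h0 : w.length ≤ L ∧ FactorAt u w i)
    (hc : w.length + c ≤ L ∧ FactorAt u w (i + c)) (hc0 : c ≠ 0)
    (ht : w.length + t ≤ L ∧ FactorAt u w (i + t)) :
    t = 0 ∨ t = c := by
  by_contra hcon
  push_neg at hcon
  unfold occCount at hocc
  rw [win_length] at hocc
  set l := (List.range (L + 1)).filter fun s => decide (w <+: (win u i L).drop s) with hl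
  have hnd : l.Nodup := List.nodup_range.filter _
  have hmem : ∀ s, (w.length + s ≤ L ∧ FactorAt u w (i + s)) → s ∈ l := by
    intro s hs
    have := mem_occ_filter_iff (u := u) (i := i) (L := L) (t := s) hw
    rw [win_length] at this
    exact this.mpr hs
  have hsub : ({0, c, t} : Finset ℕ) ⊆ l.toFinset := by
    intro s hs
    simp only [Finset.mem_insert, Finset.mem_singleton] at hs
    rcases hs with rfl | rfl | rfl
    · exact List.mem_toFinset.mpr (hmem _ (by simpa using h0))
    · exact List.mem_toFinset.mpr (hmem _ hc)
    · exact List.mem_toFinset.mpr (hmem _ ht)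
  have hcard : ({0, c, t} : Finset ℕ).card = 3 := by
    rw [Finset.card_insert_of_notMem (by simp [Ne.symm hc0, Ne.symm hcon.1]),
      Finset.card_pair (Ne.symm hcon.2)]
  have := Finset.card_le_card hsub
  rw [hcard, List.toFinset_card_of_nodup hnd, hocc] at this
  omega

def Fac (u : ℕ → A) (n : ℕ) : Set (List A) := {w | IsFactor u w ∧ w.length = n}

lemma complexity_eq (u : ℕ → A) (n : ℕ) : complexity u n = (Fac u n).ncard := rfl

lemma fac_finite [Finite A] (u : ℕ → A) (n : ℕ) : (Fac u n).Finite :=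
  (List.finite_length_eq A n).subset fun _ hw => hw.2

lemma win_mem_fac (u : ℕ → A) (i n : ℕ) : win u i n ∈ Fac u n :=
  ⟨⟨i, factorAt_win u i n⟩, win_length u i n⟩

lemma fac_eq_take_image (u : ℕ → A) (n : ℕ) :
    Fac u n = List.take n '' Fac u (n + 1) := by
  ext f
  constructor
  · rintro ⟨⟨i, hf⟩, hlen⟩
    refine ⟨win u i (n + 1), win_mem_fac u i (n + 1), ?_⟩
    rw [win_take, min_eq_left (by omega)]
    rw [factorAt_iff_win, hlen] at hf
    exact hf.symm
  · rintro ⟨g, ⟨⟨i, hg⟩, hglen⟩, rfl⟩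
    rw [factorAt_iff_win] at hg
    rw [hg, win_take, hglen]
    rw [min_eq_left (by omega)]
    exact win_mem_fac u i n

lemma complexity_mono [Finite A] (u : ℕ → A) (n : ℕ) :
    complexity u n ≤ complexity u (n + 1) := by
  rw [complexity_eq, complexity_eq, fac_eq_take_image]
  exact Set.ncard_image_le (fac_finite u (n + 1))

lemma complexity_zero (u : ℕ → A) : complexity u 0 = 1 := by
  rw [complexity_eq]
  have : Fac u 0 = {([] : List A)} := by
    ext f
    simp only [Set.mem_singleton_iff, Fac, Set.mem_setOf_eq]
    constructor
    · rintro ⟨-, h⟩; exact List.length_eq_zero_iff.mp h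
    · rintro rfl
      exact ⟨⟨0, by simp [FactorAt]⟩, rfl⟩
  rw [this, Set.ncard_singleton]

/-- Morse–Hedlund, hard direction. -/
lemma eventuallyPeriodic_of_low_complexity [Finite A] (u : ℕ → A) (n : ℕ)
    (h : complexity u n ≤ n) : EventuallyPeriodic u := by
  classical
  -- find m with complexity u (m+1) = complexity u m
  have hex : ∃ m, complexity u (m + 1) ≤ complexity u m := by
    by_contra hc
    push_neg at hc
    have : ∀ k, k + 1 ≤ complexity u k := by
      intro k
      induction k with
      | zero => simp [complexity_zero]
      | succ k ih => have := hc k; omega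
    have := this n; omega
  obtain ⟨m, hm⟩ := hex
  have heq : complexity u (m + 1) = complexity u m :=
    le_antisymm hm (complexity_mono u m)
  -- unique right extension
  have hinj : Set.InjOn (List.take m) (Fac u (m + 1)) := by
    apply Set.injOn_of_ncard_image_eq _ (fac_finite u (m + 1))
    rw [← fac_eq_take_image]
    exact heq.symm
  have hdet : ∀ i j, win u i m = win u j m → u (i + m) = u (j + m) := by
    intro i j hij
    have h1 : win u i (m + 1) = win u j (m + 1) := by
      apply hinj (win_mem_fac u i (m+1)) (win_mem_fac u j (m+1))
      rw [win_take, win_take, min_eq_left (by omega)]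
      exact hij
    have h2 : (win u i (m+1))[m]? = (win u j (m+1))[m]? := by rw [h1]
    rw [win_getElem? i (by omega), win_getElem? j (by omega)] at h2
    exact Option.some.inj h2
  -- pigeonhole
  obtain ⟨a, ha, b, hb, hab, hwab⟩ :
      ∃ a ∈ Finset.range ((fac_finite u m).toFinset.card + 1),
        ∃ b ∈ Finset.range ((fac_finite u m).toFinset.card + 1),
        a ≠ b ∧ win u a m = win u b m := by
    obtain ⟨a, ha, b, hb, hab, h⟩ := Finset.exists_ne_map_eq_of_card_lt_of_maps_to
      (t := (fac_finite u m).toFinset) (s := Finset.range ((fac_finite u m).toFinset.card + 1))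
      (by simp) (f := fun k => win u k m)
      (fun k _ => (fac_finite u m).mem_toFinset.mpr (win_mem_fac u k m))
    exact ⟨a, ha, b, hb, hab, h⟩
  wlog hlt : a < b generalizing a b
  · exact this b hb a ha hab.symm hwab.symm (by omega)
  -- propagate
  have hprop : ∀ k, win u (a + k) m = win u (b + k) m := by
    intro k
    induction k with
    | zero => simpa using hwab
    | succ k ih =>
      apply List.ext_getElem? 
      intro j
      rcases Nat.lt_or_ge j m with hj | hj
      · rw [win_getElem? _ hj, win_getElem? _ hj]
        rcases Nat.lt_or_ge (j + 1) m with hj1 | hj1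
        · have h2 : (win u (a+k) m)[j+1]? = (win u (b+k) m)[j+1]? := by rw [ih]
          rw [win_getElem? _ hj1, win_getElem? _ hj1] at h2
          have h3 := Option.some.inj h2
          have e1 : a + (k + 1) + j = a + k + (j + 1) := by omega
          have e2 : b + (k + 1) + j = b + k + (j + 1) := by omega
          rw [e1, e2, h3]
        · have hdet' := hdet (a + k) (b + k) ih
          have e1 : a + (k + 1) + j = a + k + m := by omega
          have e2 : b + (k + 1) + j = b + k + m := by omega
          rw [e1, e2, hdet']
      · rw [List.getElem?_eq_none (by simpa), List.getElem?_eq_none (by simpa)]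
  -- conclude
  rcases Nat.eq_zero_or_pos m with rfl | hm0
  · refine ⟨1, one_pos, 0, fun k _ => ?_⟩
    have := hdet (k + 1) k rfl
    simpa using this
  · refine ⟨b - a, by omega, a, fun k hk => ?_⟩
    have := hprop (k - a)
    have h0 : (win u (a + (k - a)) m)[0]? = (win u (b + (k - a)) m)[0]? := by rw [this]
    rw [win_getElem? _ hm0, win_getElem? _ hm0] at h0
    have h3 := Option.some.inj h0
    have e1 : a + (k - a) + 0 = k := by omega
    have e2 : b + (k - a) + 0 = k + (b - a) := by omega
    rw [e1, e2] at h3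
    exact h3.symm


lemma exists_global_bound [Finite A] (u : ℕ → A) (hur : UniformlyRecurrent u) (n : ℕ) :
    ∃ B, 0 < B ∧ ∀ f ∈ Fac u n, ∀ k, ∃ p, k ≤ p ∧ p < k + B ∧ FactorAt u f p := by
  classical
  set g : List A → ℕ := fun f => if h : IsFactor u f then (hur f h).choose else 0 with hg
  refine ⟨(fac_finite u n).toFinset.sup g + 1, by omega, ?_⟩
  intro f hf k
  have hfac : IsFactor u f := hf.1
  have hspec := (hur f hfac).choose_spec k
  obtain ⟨p, hkp, hplt, hfp⟩ := hspec
  refine ⟨p, hkp, ?_, hfp⟩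
  have hle : g f ≤ (fac_finite u n).toFinset.sup g :=
    Finset.le_sup ((fac_finite u n).mem_toFinset.mpr hf)
  have hgf : g f = (hur f hfac).choose := dif_pos hfac
  rw [hgf] at hle
  omega

lemma factorAt_prefix_of_append {u : ℕ → A} {z v' : List A} {j : ℕ}
    (hf : FactorAt u (v' ++ z) j) :
    FactorAt u z (j + v'.length) := by
  rw [factorAt_iff_win] at hf ⊢
  have h2 := congrArg (List.drop v'.length) hf
  rw [List.drop_left, win_drop u j (by simp)] at h2
  have h3 : (v' ++ z).length - v'.length = z.length := by simp
  rw [← h3]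
  exact h2

lemma recFun_set_bddAbove [Finite A] (u : ℕ → A) (hur : UniformlyRecurrent u)
    {n : ℕ} (hn : 0 < n) :
    BddAbove {m | ∃ w v, IsFactor u w ∧ w.length = n ∧ IsReturnWord u w v ∧
      m + 1 = v.length + w.length} := by
  obtain ⟨B, hB0, hB⟩ := exists_global_bound u hur n
  refine ⟨B + n, ?_⟩
  rintro m ⟨w', v', hw', hwlen, ⟨hvne, ⟨j, hj⟩, hpre, hocc⟩, hm⟩
  have hL : (v' ++ w').length = v'.length + n := by simp [hwlen]
  have hjwin : v' ++ w' = win u j (v'.length + n) := by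
    rw [factorAt_iff_win, hL] at hj; exact hj
  -- occurrence of w' at j and at j + v'.length
  have h0 : FactorAt u w' j := by
    have := hpre
    rw [hjwin, prefix_win_iff] at this
    exact this.2
  have hc : FactorAt u w' (j + v'.length) := factorAt_prefix_of_append hj
  have hocc' : occCount (win u j (v'.length + n)) w' = 2 := by rw [← hjwin]; exact hocc
  -- uniform recurrence: occurrence of w' in (j, j + B]
  obtain ⟨p, hp1, hp2, hp3⟩ := hB w' ⟨hw', hwlen⟩ (j + 1)
  have hple : v'.length ≤ B := by
    by_contra hcon
    push_neg at hcon
    -- p is an occurrence with j < p < j + v'.length, contradiction with occCount = 2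
    have ht : w'.length + (p - j) ≤ v'.length + n ∧ FactorAt u w' (j + (p - j)) := by
      constructor
      · omega
      · have : j + (p - j) = p := by omega
        rw [this]; exact hp3
    have := occCount_two_mem (c := v'.length) (by omega) hocc'
      ⟨by omega, h0⟩ ⟨by omega, hc⟩
      (fun h => hvne (List.length_eq_zero_iff.mp h)) ht
    omega
  omega

lemma key_ineq [Finite A] (u : ℕ → A) (hap : ¬ EventuallyPeriodic u)
    (hur : UniformlyRecurrent u) (w : List A) (hne : w ≠ [])
    (v : List A) (hv : IsFactor u v) (hfp : FracPow w v) :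
    v.length + complexity u w.length ≤ recFun u w.length + w.length := by
  classical
  set n := w.length with hn
  have npos : 0 < n := List.length_pos_iff.mpr hne
  have hvlen : n ≤ v.length := hfp.2.1
  obtain ⟨B, hB0, hB⟩ := exists_global_bound u hur n
  -- occurrence of v at position i ≥ B
  obtain ⟨Bv, hBv⟩ := hur v hv
  obtain ⟨i, hiB, -, hvi⟩ := hBv B
  rw [factorAt_iff_win] at hvi
  -- shift equality from FracPow
  have hshift : ∀ k k', k < v.length → k' < v.length → k % n = k' % n →
      u (i + k) = u (i + k') := by
    intro k k' hk hk' hmod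
    have e1 : v[k]? = some (u (i + k)) := by rw [hvi]; exact win_getElem? i hk
    have e2 : v[k']? = some (u (i + k')) := by rw [hvi]; exact win_getElem? i hk'
    have h3 : v[k]? = v[k']? := by
      rw [hfp.2.2 k hk, hfp.2.2 k' hk', hmod]
    rw [e1, e2] at h3
    exact Option.some.inj h3
  -- the set of factors occurring inside v
  set S : Set (List A) := {f | f ∈ Fac u n ∧ ∃ t, t + n ≤ v.length ∧ FactorAt u f (i + t)}
    with hSdef
  have hSsub : S ⊆ (fun j => win u (i + j) n) '' (Set.Iio n) := by
    rintro f ⟨⟨-, hflen⟩, t, htle, hft⟩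
    refine ⟨t % n, Nat.mod_lt _ npos, ?_⟩
    rw [factorAt_iff_win, hflen] at hft
    rw [hft]
    apply List.ext_getElem?
    intro s
    rcases Nat.lt_or_ge s n with hs | hs
    · rw [win_getElem? _ hs, win_getElem? _ hs]
      congr 1
      have e1 : i + (t % n) + s = i + (t % n + s) := by omega
      have e2 : i + t + s = i + (t + s) := by omega
      rw [e1, e2]
      exact hshift _ _ (by have := Nat.mod_le t n; omega) (by omega) (by rw [Nat.mod_add_mod])
    · rw [List.getElem?_eq_none (by simpa), List.getElem?_eq_none (by simpa)]
  have hSfin : S.Finite := ((Set.finite_Iio n).image _).subset hSsub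
  have hScard : S.ncard ≤ n := by
    calc S.ncard ≤ ((fun j => win u (i + j) n) '' (Set.Iio n)).ncard :=
          Set.ncard_le_ncard hSsub ((Set.finite_Iio n).image _)
      _ ≤ (Set.Iio n).ncard := Set.ncard_image_le (Set.finite_Iio n)
      _ = n := by rw [← Finset.coe_Iio, Set.ncard_coe_finset, Nat.card_Iio]
  set T : Set (List A) := Fac u n \ S with hTdef
  have hSF : S ⊆ Fac u n := fun f hf => hf.1
  have hTcard : T.ncard = (Fac u n).ncard - S.ncard := Set.ncard_diff hSF hSfin
  have hTfin : T.Finite := (fac_finite u n).subset Set.diff_subset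
  -- T is nonempty, else low complexity
  have hTne : T.Nonempty := by
    by_contra hc
    rw [Set.not_nonempty_iff_eq_empty] at hc
    have hFS : Fac u n ⊆ S := by
      intro f hf
      by_contra hfS
      exact (Set.eq_empty_iff_forall_notMem.mp hc f) ⟨hf, hfS⟩
    have : complexity u n ≤ n := by
      rw [complexity_eq]
      exact le_trans (Set.ncard_le_ncard hFS hSfin) hScard
    exact hap (eventuallyPeriodic_of_low_complexity u n this)
  -- first occurrence after i
  have hex : ∀ f ∈ Fac u n, ∃ p, i ≤ p ∧ FactorAt u f p := by
    intro f hf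
    obtain ⟨p, h1, -, h3⟩ := hB f hf i
    exact ⟨p, h1, h3⟩
  set o : List A → ℕ := fun f => if h : ∃ p, i ≤ p ∧ FactorAt u f p then Nat.find h else 0
    with ho
  have ho_spec : ∀ f ∈ Fac u n, i ≤ o f ∧ FactorAt u f (o f) ∧
      ∀ r, i ≤ r → r < o f → ¬ FactorAt u f r := by
    intro f hf
    have h := hex f hf
    simp only [ho, dif_pos h]
    refine ⟨(Nat.find_spec h).1, (Nat.find_spec h).2, ?_⟩
    intro r hr1 hr2 hr3
    exact Nat.find_min h hr2 ⟨hr1, hr3⟩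
  have ho_win : ∀ f ∈ Fac u n, f = win u (o f) n := by
    intro f hf
    have := (ho_spec f hf).2.1
    rw [factorAt_iff_win, hf.2] at this
    exact this
  have ho_inj : Set.InjOn o T := by
    intro f hf g hg hfg
    rw [ho_win f hf.1, ho_win g hg.1, hfg]
  -- factors in T occur late
  have ho_low : ∀ f ∈ T, i + (v.length - n) + 1 ≤ o f := by
    intro f hf
    by_contra hc
    push_neg at hc
    have h1 := (ho_spec f hf.1).1
    have h2 := (ho_spec f hf.1).2.1
    apply hf.2
    refine ⟨hf.1, o f - i, by omega, ?_⟩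
    have : i + (o f - i) = o f := by omega
    rw [this]; exact h2
  -- z maximizing o over T
  obtain ⟨z, hzT, hzmax⟩ := Set.exists_max_image T o hTfin hTne
  set q := o z with hq
  have hziq : i ≤ q := (ho_spec z hzT.1).1
  have hzq : FactorAt u z q := (ho_spec z hzT.1).2.1
  have hzmin : ∀ r, i ≤ r → r < q → ¬ FactorAt u z r := (ho_spec z hzT.1).2.2
  -- counting: T.ncard ≤ q + 1 - (i + (v.length - n) + 1)
  have hcount : T.ncard ≤ q + 1 - (i + (v.length - n) + 1) := by
    have himg : o '' T ⊆ Set.Icc (i + (v.length - n) + 1) q := by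
      rintro x ⟨f, hf, rfl⟩
      exact ⟨ho_low f hf, hzmax f hf⟩
    calc T.ncard = (o '' T).ncard := (Set.ncard_image_of_injOn ho_inj).symm
      _ ≤ (Set.Icc (i + (v.length - n) + 1) q).ncard :=
          Set.ncard_le_ncard himg (Set.finite_Icc _ _)
      _ = q + 1 - (i + (v.length - n) + 1) := by
          rw [← Finset.coe_Icc, Set.ncard_coe_finset, Nat.card_Icc]
  have hTpos : 1 ≤ T.ncard := (Set.ncard_pos hTfin).mpr hTne
  -- last occurrence of z before i
  obtain ⟨p0, -, hp0B, hp0⟩ := hB z hzT.1 0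
  have hp0i : p0 ≤ i - 1 := by omega
  set p := Nat.findGreatest (fun r => FactorAt u z r) (i - 1) with hp
  have hpz : FactorAt u z p := Nat.findGreatest_spec hp0i hp0
  have hpi : p < i := by
    have := Nat.findGreatest_le (P := fun r => FactorAt u z r) (i - 1)
    omega
  have hpmax : ∀ r, p < r → r < i → ¬ FactorAt u z r := by
    intro r h1 h2
    exact Nat.findGreatest_is_greatest h1 (by omega)
  have hnogap : ∀ r, p < r → r < q → ¬ FactorAt u z r := by
    intro r h1 h2
    rcases Nat.lt_or_ge r i with h | h
    · exact hpmax r h1 h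
    · exact hzmin r h h2
  -- the return word
  have hzlen : z.length = n := hzT.1.2
  have hzwin : z = win u p n := by
    have := hpz; rw [factorAt_iff_win, hzlen] at this; exact this
  have hzwinq : z = win u q n := by
    have := hzq; rw [factorAt_iff_win, hzlen] at this; exact this
  set v' := win u p (q - p) with hv'
  have hv'len : v'.length = q - p := win_length u p (q - p)
  have happ : v' ++ z = win u p ((q - p) + n) := by
    rw [win_add, hv']
    congr 1
    rw [hzwinq]
    congr 1
    omega
  have hret : IsReturnWord u z v' := by
    refine ⟨?_, ⟨p, ?_⟩, ?_, ?_⟩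
    · intro hcon
      have := congrArg List.length hcon
      rw [hv'len] at this
      simp at this
      omega
    · rw [factorAt_iff_win, List.length_append, hv'len, hzlen]
      exact happ
    · rw [happ, prefix_win_iff, hzlen]
      exact ⟨by omega, hpz⟩
    · rw [happ]
      apply occCount_eq_two (by omega) (c := q - p) (by omega)
      intro t
      constructor
      · rintro ⟨ht1, ht2⟩
        rcases Nat.eq_zero_or_pos t with rfl | htpos
        · exact Or.inl rfl
        rcases Nat.lt_or_ge t (q - p) with h | h
        · exact absurd ht2 (hnogap (p + t) (by omega) (by omega))
        · right; omega
      · rintro (rfl | rfl)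
        · exact ⟨by omega, by simpa using hpz⟩
        · refine ⟨by omega, ?_⟩
          have : p + (q - p) = q := by omega
          rw [this]; exact hzq
  -- membership in the recFun set
  have hmem : (q - p) + n - 1 ∈ {m | ∃ w v, IsFactor u w ∧ w.length = n ∧
      IsReturnWord u w v ∧ m + 1 = v.length + w.length} := by
    refine ⟨z, v', ⟨p, hpz⟩, hzlen, hret, ?_⟩
    rw [hv'len, hzlen]
    omega
  have hle : (q - p) + n - 1 ≤ recFun u n :=
    le_csSup (recFun_set_bddAbove u hur npos) hmem
  rw [complexity_eq]
  omega

/-- lower bound `R(|w|) ≥ |w|·ind(w) + C(|w|) − |w|` on the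
recurrence function of an aperiodic uniformly recurrent word. -/
theorem recFun_ge_index {A : Type*} [DecidableEq A] [Fintype A]
    (u : ℕ → A) (hap : ¬ EventuallyPeriodic u) (hur : UniformlyRecurrent u)
    (w : List A) (hw : IsFactor u w) (hne : w ≠ []) :
    (recFun u w.length : ℝ) ≥
      (w.length : ℝ) * index u w + (complexity u w.length : ℝ) - (w.length : ℝ) := by
  classical
  set n := w.length with hn
  have npos : 0 < n := List.length_pos_iff.mpr hne
  have hnpos : (0:ℝ) < n := by exact_mod_cast npos
  have hkey : ∀ r ∈ expSet u w, r ≤ ((recFun u n : ℝ) + n - complexity u n) / n := by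
    rintro r ⟨v, hvfac, hvfp, rfl⟩
    have h := key_ineq u hap hur w hne v hvfac hvfp
    have h' : (v.length : ℝ) + complexity u n ≤ (recFun u n : ℝ) + n := by exact_mod_cast h
    rw [← hn]
    exact (div_le_div_iff_of_pos_right hnpos).mpr (by linarith)
  have hmem1 : (1:ℝ) ∈ expSet u w := by
    refine ⟨w, hw, ⟨hne, le_refl _, fun i hi => by rw [Nat.mod_eq_of_lt hi]⟩, ?_⟩
    rw [div_self (ne_of_gt hnpos)]
  have hsup : index u w ≤ ((recFun u n : ℝ) + n - complexity u n) / n :=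
    csSup_le ⟨1, hmem1⟩ hkey
  have h2 : index u w * n ≤ (recFun u n : ℝ) + n - complexity u n := by
    rw [← le_div_iff₀ hnpos]; exact hsup
  have h3 : (n : ℝ) * index u w = index u w * n := mul_comm _ _
  linarith

end SturmianPaper
end
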